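/- Let η ∈ ℂ with |η| = 1, and let φ be an automorphism of 𝔻, i.e. there exist ξ ∈ ℂ with |ξ| = 1 and a₀ ∈ 𝔻 such that φ(z) = ξ·(a₀ - z)/(1 - conj(a₀)·z) for all z ∈ 𝔻. Suppose in addition there exist b ∈ 𝔻 and c ∈ ℂ such that φ(z) = b + cz/(1 - ηbz) for all z ∈ 𝔻. Then either (a) there exists ξ' ∈ ℂ with |ξ'| = 1 such that φ(z) = -ξ'·z for all z ∈ 𝔻, or (b) a₀ ≠ 0 and φ(z) = (conj(a₀)/(η·a₀)) · (a₀ - z)/(1 - conj(a₀)·z) for all z ∈ 𝔻. -/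

import Mathlib

open ComplexConjugate

/-- Theorem 2.2: if `φ` is a disk automorphism `φ(z) = ξ(a₀-z)/(1-conj(a₀)z)` which
also has the form `φ(z) = b + cz/(1-ηbz)` forced by `C_{μ,η}`-symmetry, then
either `φ(z) = -ξ'z` for some unimodular `ξ'`, or `a₀ ≠ 0` and
`φ(z) = (conj(a₀)/(η a₀))·(a₀-z)/(1-conj(a₀)z)`. -/
theorem stmt6 (η ξ a₀ : ℂ) (hη : ‖η‖ = 1) (hξ : ‖ξ‖ = 1)
    (ha₀ : a₀ ∈ Metric.ball (0 : ℂ) 1)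
    (φ : ℂ → ℂ)
    (hφauto : ∀ z ∈ Metric.ball (0 : ℂ) 1,
      φ z = ξ * (a₀ - z) / (1 - conj a₀ * z))
    (b c : ℂ) (hb : b ∈ Metric.ball (0 : ℂ) 1)
    (hφform : ∀ z ∈ Metric.ball (0 : ℂ) 1,
      φ z = b + c * z / (1 - η * b * z)) :
    (∃ ξ' : ℂ, ‖ξ'‖ = 1 ∧
        ∀ z ∈ Metric.ball (0 : ℂ) 1, φ z = -ξ' * z) ∨
    (a₀ ≠ 0 ∧ ∀ z ∈ Metric.ball (0 : ℂ) 1,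
        φ z = (conj a₀ / (η * a₀)) * ((a₀ - z) / (1 - conj a₀ * z))) := by
  have hη0 : η ≠ 0 := by intro h; simp [h] at hη
  have hξ0 : ξ ≠ 0 := by intro h; simp [h] at hξ
  have habs : ‖a₀‖ < 1 := by simpa [Complex.dist_eq] using ha₀
  have hbabs : ‖b‖ < 1 := by simpa [Complex.dist_eq] using hb
  by_cases ha : a₀ = 0
  · left
    refine ⟨ξ, hξ, fun z hz => ?_⟩
    rw [hφauto z hz, ha]
    simp
  · right
    refine ⟨ha, ?_⟩
    have hden1 : ∀ z ∈ Metric.ball (0 : ℂ) 1, (1 : ℂ) - conj a₀ * z ≠ 0 := by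
      intro z hz h
      have hzabs : ‖z‖ < 1 := by simpa [Complex.dist_eq] using hz
      have h1 : conj a₀ * z = 1 := by linear_combination -h
      have : ‖conj a₀ * z‖ < 1 := by
        rw [norm_mul, Complex.norm_conj]
        calc ‖a₀‖ * ‖z‖ ≤ 1 * ‖z‖ := by
              exact mul_le_mul_of_nonneg_right habs.le (norm_nonneg z)
          _ = ‖z‖ := one_mul _
          _ < 1 := hzabs
      rw [h1] at this; simp at this
    have hden2 : ∀ z ∈ Metric.ball (0 : ℂ) 1, (1 : ℂ) - η * b * z ≠ 0 := by
      intro z hz h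
      have hzabs : ‖z‖ < 1 := by simpa [Complex.dist_eq] using hz
      have h1 : η * b * z = 1 := by linear_combination -h
      have : ‖η * b * z‖ < 1 := by
        rw [norm_mul, norm_mul, hη, one_mul]
        calc ‖b‖ * ‖z‖ ≤ 1 * ‖z‖ := by
              exact mul_le_mul_of_nonneg_right hbabs.le (norm_nonneg z)
          _ = ‖z‖ := one_mul _
          _ < 1 := hzabs
      rw [h1] at this; simp at this
    have key : ∀ z ∈ Metric.ball (0 : ℂ) 1,
        ξ * (a₀ - z) * (1 - η * b * z)
          = (b * (1 - η * b * z) + c * z) * (1 - conj a₀ * z) := by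
      intro z hz
      have h1 := hφauto z hz
      have h2 := hφform z hz
      have h3 : ξ * (a₀ - z) / (1 - conj a₀ * z) = b + c * z / (1 - η * b * z) :=
        h1.symm.trans h2
      have e1 : ξ * (a₀ - z) / (1 - conj a₀ * z) * (1 - conj a₀ * z) = ξ * (a₀ - z) :=
        div_mul_cancel₀ _ (hden1 z hz)
      have e2 : c * z / (1 - η * b * z) * (1 - η * b * z) = c * z :=
        div_mul_cancel₀ _ (hden2 z hz)
      linear_combination (1 - conj a₀ * z) * (1 - η * b * z) * h3
        - (1 - η * b * z) * e1 + (1 - conj a₀ * z) * e2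
    have e0 := key 0 (by simp)
    have e1 := key (1/2) (by
      simp only [Metric.mem_ball, dist_zero_right]
      rw [show ((1:ℂ)/2) = ((1/2 : ℝ) : ℂ) by norm_num]
      rw [Complex.norm_real]
      norm_num)
    have e2 := key (-(1/2)) (by
      simp only [Metric.mem_ball, dist_zero_right, norm_neg]
      rw [show ((1:ℂ)/2) = ((1/2 : ℝ) : ℂ) by norm_num]
      rw [Complex.norm_real]
      norm_num)
    have hne : (1 : ℂ) - a₀ * conj a₀ ≠ 0 := by
      intro h
      have h1 : a₀ * conj a₀ = 1 := by linear_combination -h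
      rw [Complex.mul_conj] at h1
      have h2 : Complex.normSq a₀ = 1 := by exact_mod_cast h1
      have h3 : Complex.normSq a₀ < 1 := by
        have := habs
        rw [← Complex.sq_norm]
        nlinarith [norm_nonneg a₀]
      linarith
    have hkey : conj a₀ = ξ * η * a₀ := by
      have hc : ξ * (conj a₀ * (1 - a₀ * conj a₀))
          = ξ * (ξ * η * a₀ * (1 - a₀ * conj a₀)) := by
        linear_combination (-(conj a₀) - 2) * e1 + (conj a₀ - 2) * e2
          + (4 - (conj a₀)^2 - ξ * η + ξ * η * a₀ * conj a₀) * e0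
      have h4 := mul_left_cancel₀ hξ0 hc
      exact mul_right_cancel₀ hne h4
    intro z hz
    have hxi : conj a₀ / (η * a₀) = ξ := by
      rw [hkey]; field_simp
    rw [hφauto z hz, hxi, mul_div_assoc]
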